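/- Let ℓ : [0,∞) → [0,∞) be a convex strictly increasing function, let A < B be reals, let μ be a Borel probability measure on ℝ with support contained in [A,B], and let c ∈ (A,B). For a Borel probability measure ν supported in [A,B], write φ_ν(α) = ∫ ℓ(|α − x|) dν(x), D⁺_ν(c) = ∫_{(−∞,c]} ℓ'₊(c − x) dν(x) − ∫_{(c,∞)} ℓ'₋(x − c) dν(x) and D⁻_ν(c) = ∫_{[c,∞)} ℓ'₊(x − c) dν(x) − ∫_{(−∞,c)} ℓ'₋(c − x) dν(x). Then the following are equivalent: (i) D⁺_μ(c) > 0 and D⁻_μ(c) > 0; (ii) there exists ε > 0 such that for every Borel probability measure ν supported in [A,B] with total variation distance tv(ν, μ) ≤ ε, the set of minimizers of φ_ν over ℝ equals {c}. -/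

import Mathlib

open MeasureTheory Set Filter Topology

section Aux
variable {ℓ ℓp ℓm : ℝ → ℝ}

lemma aux_rd_le_slope (h_convex : ConvexOn ℝ (Set.Ici 0) ℓ)
    (h_right : ∀ z, 0 ≤ z → HasDerivWithinAt ℓ (ℓp z) (Set.Ici z) z)
    {a b : ℝ} (ha : 0 ≤ a) (hab : a < b) :
    ℓp a ≤ (ℓ b - ℓ a) / (b - a) := by
  have h := hasDerivWithinAt_iff_tendsto_slope.mp (h_right a ha)
  rw [Set.Ici_sdiff_left] at h
  haveI : (𝓝[>] a).NeBot := nhdsGT_neBot a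
  refine le_of_tendsto h ?_
  filter_upwards [self_mem_nhdsWithin, eventually_nhdsWithin_of_eventually_nhds
    (Filter.Tendsto.eventually_lt_const hab tendsto_id)] with w hw hwb
  rw [slope_def_field]
  exact h_convex.secant_mono ha (le_of_lt (lt_of_le_of_lt ha hw))
    (le_of_lt (lt_of_le_of_lt ha hab)) (ne_of_gt hw) (ne_of_gt hab) (le_of_lt hwb)

lemma aux_slope_le_ld (h_convex : ConvexOn ℝ (Set.Ici 0) ℓ)
    (h_left : ∀ z, 0 < z → HasDerivWithinAt ℓ (ℓm z) (Set.Iic z) z)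
    {a b : ℝ} (ha : 0 ≤ a) (hab : a < b) :
    (ℓ b - ℓ a) / (b - a) ≤ ℓm b := by
  have hb : 0 < b := lt_of_le_of_lt ha hab
  have h := hasDerivWithinAt_iff_tendsto_slope.mp (h_left b hb)
  rw [Set.Iic_diff_right] at h
  haveI : (𝓝[<] b).NeBot := nhdsLT_neBot b
  refine ge_of_tendsto h ?_
  filter_upwards [self_mem_nhdsWithin, eventually_nhdsWithin_of_eventually_nhds
    (Filter.Tendsto.eventually_const_lt hab tendsto_id)] with w hw hwa
  rw [slope_def_field]
  have : (ℓ b - ℓ a) / (b - a) = (ℓ a - ℓ b) / (a - b) := by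
    rw [← neg_div_neg_eq]; ring_nf
  rw [this]
  exact h_convex.secant_mono hb.le ha (le_of_lt (lt_of_le_of_lt ha hwa))
    (ne_of_lt hab) (ne_of_lt hw) (le_of_lt hwa)

lemma aux_ld_le_slope (h_convex : ConvexOn ℝ (Set.Ici 0) ℓ)
    (h_left : ∀ z, 0 < z → HasDerivWithinAt ℓ (ℓm z) (Set.Iic z) z)
    {b d : ℝ} (hb : 0 < b) (hbd : b < d) :
    ℓm b ≤ (ℓ d - ℓ b) / (d - b) := by
  have h := hasDerivWithinAt_iff_tendsto_slope.mp (h_left b hb)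
  rw [Set.Iic_diff_right] at h
  haveI : (𝓝[<] b).NeBot := nhdsLT_neBot b
  refine le_of_tendsto h ?_
  filter_upwards [self_mem_nhdsWithin, eventually_nhdsWithin_of_eventually_nhds
    (Filter.Tendsto.eventually_const_lt hb tendsto_id)] with w hw hw0
  rw [slope_def_field]
  have : slope ℓ b w = (ℓ b - ℓ w) / (b - w) := by
    rw [slope_def_field, ← neg_div_neg_eq]; ring_nf
  calc (ℓ w - ℓ b) / (w - b) = (ℓ b - ℓ w) / (b - w) := by
        rw [← neg_div_neg_eq]; ring_nf
    _ ≤ (ℓ d - ℓ b) / (d - b) :=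
        h_convex.slope_mono_adjacent hw0.le (le_of_lt (hb.trans hbd)) hw hbd

lemma aux_ld_le_rd (h_convex : ConvexOn ℝ (Set.Ici 0) ℓ)
    (h_right : ∀ z, 0 ≤ z → HasDerivWithinAt ℓ (ℓp z) (Set.Ici z) z)
    (h_left : ∀ z, 0 < z → HasDerivWithinAt ℓ (ℓm z) (Set.Iic z) z)
    {b : ℝ} (hb : 0 < b) : ℓm b ≤ ℓp b := by
  have h := hasDerivWithinAt_iff_tendsto_slope.mp (h_right b hb.le)
  rw [Set.Ici_sdiff_left] at h
  haveI : (𝓝[>] b).NeBot := nhdsGT_neBot b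
  refine ge_of_tendsto h ?_
  filter_upwards [self_mem_nhdsWithin] with d hd
  rw [slope_def_field]
  exact aux_ld_le_slope h_convex h_left hb hd

lemma aux_rd_nonneg (h_convex : ConvexOn ℝ (Set.Ici 0) ℓ)
    (h_smono : StrictMonoOn ℓ (Set.Ici 0))
    (h_right : ∀ z, 0 ≤ z → HasDerivWithinAt ℓ (ℓp z) (Set.Ici z) z)
    {a : ℝ} (ha : 0 ≤ a) : 0 ≤ ℓp a := by
  have h := hasDerivWithinAt_iff_tendsto_slope.mp (h_right a ha)
  rw [Set.Ici_sdiff_left] at h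
  haveI : (𝓝[>] a).NeBot := nhdsGT_neBot a
  refine ge_of_tendsto h ?_
  filter_upwards [self_mem_nhdsWithin] with w hw
  rw [slope_def_field]
  have : ℓ a < ℓ w := h_smono ha (le_of_lt (lt_of_le_of_lt ha hw)) hw
  have hwa : (0:ℝ) < w - a := by
    have : a < w := hw
    linarith
  have : (0:ℝ) < ℓ w - ℓ a := by linarith
  positivity

lemma aux_ld_pos (h_convex : ConvexOn ℝ (Set.Ici 0) ℓ)
    (h_smono : StrictMonoOn ℓ (Set.Ici 0))
    (h_left : ∀ z, 0 < z → HasDerivWithinAt ℓ (ℓm z) (Set.Iic z) z)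
    {b : ℝ} (hb : 0 < b) : 0 < ℓm b := by
  have h1 : (ℓ b - ℓ (b/2)) / (b - b/2) ≤ ℓm b :=
    aux_slope_le_ld h_convex h_left (by linarith) (by linarith)
  have h2 : ℓ (b/2) < ℓ b := h_smono (by linarith : (0:ℝ) ≤ b/2) hb.le (by linarith)
  have h3 : (0:ℝ) < b - b/2 := by linarith
  have : (0:ℝ) < (ℓ b - ℓ (b/2)) / (b - b/2) := by
    apply div_pos <;> linarith
  linarith

lemma aux_rd_le_ld (h_convex : ConvexOn ℝ (Set.Ici 0) ℓ)
    (h_right : ∀ z, 0 ≤ z → HasDerivWithinAt ℓ (ℓp z) (Set.Ici z) z)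
    (h_left : ∀ z, 0 < z → HasDerivWithinAt ℓ (ℓm z) (Set.Iic z) z)
    {a b : ℝ} (ha : 0 ≤ a) (hab : a < b) : ℓp a ≤ ℓm b :=
  (aux_rd_le_slope h_convex h_right ha hab).trans
    (aux_slope_le_ld h_convex h_left ha hab)

lemma aux_rd_mono (h_convex : ConvexOn ℝ (Set.Ici 0) ℓ)
    (h_right : ∀ z, 0 ≤ z → HasDerivWithinAt ℓ (ℓp z) (Set.Ici z) z)
    (h_left : ∀ z, 0 < z → HasDerivWithinAt ℓ (ℓm z) (Set.Iic z) z)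
    {a b : ℝ} (ha : 0 ≤ a) (hab : a ≤ b) : ℓp a ≤ ℓp b := by
  rcases eq_or_lt_of_le hab with rfl | h
  · exact le_rfl
  · exact (aux_rd_le_ld h_convex h_right h_left ha h).trans
      (aux_ld_le_rd h_convex h_right h_left (lt_of_le_of_lt ha h))

noncomputable def extAbs (f : ℝ → ℝ) : ℝ → ℝ := fun z => f (max z 0)
noncomputable def extLd (ℓp ℓm : ℝ → ℝ) : ℝ → ℝ := fun z => if z ≤ 0 then ℓp 0 else ℓm z

lemma extAbs_mono {f : ℝ → ℝ} (hf : ∀ a b : ℝ, 0 ≤ a → a ≤ b → f a ≤ f b) :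
    Monotone (extAbs f) := fun a b hab =>
  hf _ _ (le_max_right _ _) (max_le_max hab le_rfl)

lemma extAbs_abs (f : ℝ → ℝ) (t : ℝ) : extAbs f |t| = f |t| := by
  simp [extAbs, max_eq_left (abs_nonneg t)]

lemma extAbs_of_nonneg (f : ℝ → ℝ) {z : ℝ} (hz : 0 ≤ z) : extAbs f z = f z := by
  simp [extAbs, max_eq_left hz]

lemma extLd_of_pos (ℓp ℓm : ℝ → ℝ) {z : ℝ} (hz : 0 < z) : extLd ℓp ℓm z = ℓm z := by
  simp [extLd, not_le.mpr hz]

lemma aux_ell_mono (h_smono : StrictMonoOn ℓ (Set.Ici 0)) :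
    ∀ a b : ℝ, 0 ≤ a → a ≤ b → ℓ a ≤ ℓ b := fun a b ha hab =>
  h_smono.monotoneOn ha (ha.trans hab) hab

lemma extAbs_ell_mono (h_smono : StrictMonoOn ℓ (Set.Ici 0)) :
    Monotone (extAbs ℓ) := extAbs_mono (aux_ell_mono h_smono)

lemma extAbs_rd_mono (h_convex : ConvexOn ℝ (Set.Ici 0) ℓ)
    (h_right : ∀ z, 0 ≤ z → HasDerivWithinAt ℓ (ℓp z) (Set.Ici z) z)
    (h_left : ∀ z, 0 < z → HasDerivWithinAt ℓ (ℓm z) (Set.Iic z) z) :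
    Monotone (extAbs ℓp) :=
  extAbs_mono (fun a b ha hab => aux_rd_mono h_convex h_right h_left ha hab)

lemma extLd_mono (h_convex : ConvexOn ℝ (Set.Ici 0) ℓ)
    (h_right : ∀ z, 0 ≤ z → HasDerivWithinAt ℓ (ℓp z) (Set.Ici z) z)
    (h_left : ∀ z, 0 < z → HasDerivWithinAt ℓ (ℓm z) (Set.Iic z) z) :
    Monotone (extLd ℓp ℓm) := by
  intro a b hab
  unfold extLd
  split_ifs with h1 h2 h2
  · exact le_rfl
  · exact aux_rd_le_ld h_convex h_right h_left le_rfl (not_le.mp h2)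
  · exact absurd (hab.trans h2) h1
  · rcases eq_or_lt_of_le hab with rfl | h
    · exact le_rfl
    · exact ((aux_ld_le_rd h_convex h_right h_left (not_le.mp h1)).trans
        (aux_rd_le_ld h_convex h_right h_left (not_le.mp h1).le h))

lemma extAbs_rd_nonneg (h_convex : ConvexOn ℝ (Set.Ici 0) ℓ)
    (h_smono : StrictMonoOn ℓ (Set.Ici 0))
    (h_right : ∀ z, 0 ≤ z → HasDerivWithinAt ℓ (ℓp z) (Set.Ici z) z) (z : ℝ) :
    0 ≤ extAbs ℓp z := aux_rd_nonneg h_convex h_smono h_right (le_max_right _ _)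

lemma extLd_nonneg (h_convex : ConvexOn ℝ (Set.Ici 0) ℓ)
    (h_smono : StrictMonoOn ℓ (Set.Ici 0))
    (h_right : ∀ z, 0 ≤ z → HasDerivWithinAt ℓ (ℓp z) (Set.Ici z) z)
    (h_left : ∀ z, 0 < z → HasDerivWithinAt ℓ (ℓm z) (Set.Iic z) z) (z : ℝ) :
    0 ≤ extLd ℓp ℓm z := by
  unfold extLd; split_ifs with h
  · exact aux_rd_nonneg h_convex h_smono h_right le_rfl
  · exact (aux_ld_pos h_convex h_smono h_left (not_le.mp h)).le

lemma extAbs_rd_le (h_convex : ConvexOn ℝ (Set.Ici 0) ℓ)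
    (h_right : ∀ z, 0 ≤ z → HasDerivWithinAt ℓ (ℓp z) (Set.Ici z) z)
    (h_left : ∀ z, 0 < z → HasDerivWithinAt ℓ (ℓm z) (Set.Iic z) z)
    {z M : ℝ} (hM : 0 ≤ M) (hz : z ≤ M) : extAbs ℓp z ≤ ℓp M := by
  have : extAbs ℓp M = ℓp M := extAbs_of_nonneg _ hM
  rw [← this]
  exact extAbs_rd_mono h_convex h_right h_left hz

lemma extLd_le (h_convex : ConvexOn ℝ (Set.Ici 0) ℓ)
    (h_right : ∀ z, 0 ≤ z → HasDerivWithinAt ℓ (ℓp z) (Set.Ici z) z)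
    (h_left : ∀ z, 0 < z → HasDerivWithinAt ℓ (ℓm z) (Set.Iic z) z)
    {z M : ℝ} (hM : 0 ≤ M) (hz : z ≤ M) : extLd ℓp ℓm z ≤ ℓp M := by
  unfold extLd; split_ifs with h
  · exact aux_rd_mono h_convex h_right h_left le_rfl hM
  · exact (aux_ld_le_rd h_convex h_right h_left (not_le.mp h)).trans
      (aux_rd_mono h_convex h_right h_left (not_le.mp h).le hz)

lemma aux_pointwise_plus (h_convex : ConvexOn ℝ (Set.Ici 0) ℓ)
    (h_smono : StrictMonoOn ℓ (Set.Ici 0))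
    (h_right : ∀ z, 0 ≤ z → HasDerivWithinAt ℓ (ℓp z) (Set.Ici z) z)
    (h_left : ∀ z, 0 < z → HasDerivWithinAt ℓ (ℓm z) (Set.Iic z) z)
    {c β : ℝ} (hcβ : c < β) (x : ℝ) :
    (β - c) * (if x ≤ c then ℓp (c - x) else -ℓm (x - c)) ≤ ℓ |β - x| - ℓ |c - x| := by
  by_cases hx : x ≤ c
  · rw [if_pos hx, abs_of_nonneg (by linarith : (0:ℝ) ≤ β - x),
      abs_of_nonneg (by linarith : (0:ℝ) ≤ c - x)]
    have key := aux_rd_le_slope h_convex h_right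
      (by linarith : (0:ℝ) ≤ c - x) (by linarith : c - x < β - x)
    have hd : (ℓ (β - x) - ℓ (c - x)) / (β - x - (c - x)) =
        (ℓ (β - x) - ℓ (c - x)) / (β - c) := by ring_nf
    rw [hd] at key
    have := (le_div_iff₀ (by linarith : (0:ℝ) < β - c)).mp key
    linarith
  · push_neg at hx
    rw [if_neg (not_le.mpr hx)]
    by_cases hxβ : β ≤ x
    · rw [abs_of_nonpos (by linarith : β - x ≤ 0), abs_of_nonpos (by linarith : c - x ≤ 0)]
      have key := aux_slope_le_ld h_convex h_left
        (by linarith : (0:ℝ) ≤ x - β) (by linarith : x - β < x - c)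
      have hd : (ℓ (x - c) - ℓ (x - β)) / (x - c - (x - β)) =
          (ℓ (x - c) - ℓ (x - β)) / (β - c) := by ring_nf
      rw [hd] at key
      have := (div_le_iff₀ (by linarith : (0:ℝ) < β - c)).mp key
      rw [neg_sub, neg_sub]
      linarith
    · push_neg at hxβ
      rw [abs_of_nonneg (by linarith : (0:ℝ) ≤ β - x), abs_of_nonpos (by linarith : c - x ≤ 0)]
      have h0 : ℓ 0 ≤ ℓ (β - x) :=
        h_smono.monotoneOn (le_refl (0:ℝ)) (by linarith : (0:ℝ) ≤ β - x) (by linarith)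
      have key := aux_slope_le_ld h_convex h_left (le_refl (0:ℝ)) (by linarith : (0:ℝ) < x - c)
      rw [sub_zero] at key
      have h1 := (div_le_iff₀ (by linarith : (0:ℝ) < x - c)).mp key
      have h2 : 0 < ℓm (x - c) := aux_ld_pos h_convex h_smono h_left (by linarith)
      have h3 : (x - c) * ℓm (x - c) ≤ (β - c) * ℓm (x - c) :=
        mul_le_mul_of_nonneg_right (by linarith) h2.le
      rw [neg_sub]
      linarith

lemma aux_pointwise_minus (h_convex : ConvexOn ℝ (Set.Ici 0) ℓ)
    (h_smono : StrictMonoOn ℓ (Set.Ici 0))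
    (h_right : ∀ z, 0 ≤ z → HasDerivWithinAt ℓ (ℓp z) (Set.Ici z) z)
    (h_left : ∀ z, 0 < z → HasDerivWithinAt ℓ (ℓm z) (Set.Iic z) z)
    {c β : ℝ} (hβc : β < c) (x : ℝ) :
    (c - β) * (if c ≤ x then ℓp (x - c) else -ℓm (c - x)) ≤ ℓ |β - x| - ℓ |c - x| := by
  by_cases hx : c ≤ x
  · rw [if_pos hx, abs_of_nonpos (by linarith : β - x ≤ 0),
      abs_of_nonpos (by linarith : c - x ≤ 0), neg_sub, neg_sub]
    have key := aux_rd_le_slope h_convex h_right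
      (by linarith : (0:ℝ) ≤ x - c) (by linarith : x - c < x - β)
    have hd : (ℓ (x - β) - ℓ (x - c)) / (x - β - (x - c)) =
        (ℓ (x - β) - ℓ (x - c)) / (c - β) := by ring_nf
    rw [hd] at key
    have := (le_div_iff₀ (by linarith : (0:ℝ) < c - β)).mp key
    linarith
  · push_neg at hx
    rw [if_neg (not_le.mpr hx)]
    by_cases hxβ : x ≤ β
    · rw [abs_of_nonneg (by linarith : (0:ℝ) ≤ β - x),
        abs_of_nonneg (by linarith : (0:ℝ) ≤ c - x)]
      have key := aux_slope_le_ld h_convex h_left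
        (by linarith : (0:ℝ) ≤ β - x) (by linarith : β - x < c - x)
      have hd : (ℓ (c - x) - ℓ (β - x)) / (c - x - (β - x)) =
          (ℓ (c - x) - ℓ (β - x)) / (c - β) := by ring_nf
      rw [hd] at key
      have := (div_le_iff₀ (by linarith : (0:ℝ) < c - β)).mp key
      linarith
    · push_neg at hxβ
      rw [abs_of_nonpos (by linarith : β - x ≤ 0),
        abs_of_nonneg (by linarith : (0:ℝ) ≤ c - x), neg_sub]
      have h0 : ℓ 0 ≤ ℓ (x - β) :=
        h_smono.monotoneOn (le_refl (0:ℝ)) (by linarith : (0:ℝ) ≤ x - β) (by linarith)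
      have key := aux_slope_le_ld h_convex h_left (le_refl (0:ℝ)) (by linarith : (0:ℝ) < c - x)
      rw [sub_zero] at key
      have h1 := (div_le_iff₀ (by linarith : (0:ℝ) < c - x)).mp key
      have h2 : 0 < ℓm (c - x) := aux_ld_pos h_convex h_smono h_left (by linarith)
      have h3 : (c - x) * ℓm (c - x) ≤ (c - β) * ℓm (c - x) :=
        mul_le_mul_of_nonneg_right (by linarith) h2.le
      linarith


end Aux

lemma aux_ae_mem {A B : ℝ} (ν : Measure ℝ) [IsProbabilityMeasure ν]
    (h : ν (Set.Icc A B) = 1) : ∀ᵐ x ∂ν, x ∈ Set.Icc A B := by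
  have h0 : ν (Set.Icc A B)ᶜ = 0 := (prob_compl_eq_zero_iff measurableSet_Icc).mpr h
  rw [measure_eq_zero_iff_ae_notMem] at h0
  filter_upwards [h0] with x hx
  simpa using hx

lemma aux_integrable {A B : ℝ} (ν : Measure ℝ) [IsProbabilityMeasure ν]
    (hν : ν (Set.Icc A B) = 1) (f : ℝ → ℝ) (hf : Measurable f) (C : ℝ)
    (hb : ∀ x ∈ Set.Icc A B, |f x| ≤ C) : Integrable f ν := by
  apply Integrable.mono' (integrable_const C) hf.aestronglyMeasurable
  filter_upwards [aux_ae_mem ν hν] with x hx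
  simpa [Real.norm_eq_abs] using hb x hx

lemma aux_tv_bound (μ ν : Measure ℝ) [IsProbabilityMeasure μ] [IsProbabilityMeasure ν]
    (ε : ℝ) (htv : ∀ s : Set ℝ, MeasurableSet s → |(ν s).toReal - (μ s).toReal| ≤ ε)
    (f : ℝ → ℝ) (hf : Measurable f) (hnn : ∀ x, 0 ≤ f x) (K : ℝ) (hK : 0 ≤ K)
    (hbν : ∀ᵐ x ∂ν, f x ≤ K) (hbμ : ∀ᵐ x ∂μ, f x ≤ K) :
    |(∫ x, f x ∂ν) - ∫ x, f x ∂μ| ≤ K * ε := by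
  have hintν : Integrable f ν := by
    apply Integrable.mono' (integrable_const K) hf.aestronglyMeasurable
    filter_upwards [hbν] with x hx
    rw [Real.norm_eq_abs, abs_of_nonneg (hnn x)]; exact hx
  have hintμ : Integrable f μ := by
    apply Integrable.mono' (integrable_const K) hf.aestronglyMeasurable
    filter_upwards [hbμ] with x hx
    rw [Real.norm_eq_abs, abs_of_nonneg (hnn x)]; exact hx
  rw [hintν.integral_eq_integral_Ioc_meas_le (Eventually.of_forall hnn) hbν,
    hintμ.integral_eq_integral_Ioc_meas_le (Eventually.of_forall hnn) hbμ]
  have meas1 : ∀ (ρ : Measure ℝ), Measurable (fun t : ℝ => (ρ {a : ℝ | t ≤ f a}).toReal) := by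
    intro ρ
    apply Measurable.ennreal_toReal
    exact Antitone.measurable (fun s t hst => measure_mono (fun a ha => hst.trans ha))
  haveI : IsFiniteMeasure (volume.restrict (Set.Ioc (0:ℝ) K)) :=
    ⟨by rw [Measure.restrict_apply_univ]; exact measure_Ioc_lt_top⟩
  have bdd1 : ∀ (ρ : Measure ℝ), IsProbabilityMeasure ρ →
      Integrable (fun t : ℝ => (ρ {a : ℝ | t ≤ f a}).toReal) (volume.restrict (Set.Ioc 0 K)) := by
    intro ρ hρ
    apply Integrable.mono' (integrable_const 1) (meas1 ρ).aestronglyMeasurable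
    apply Eventually.of_forall
    intro t
    rw [Real.norm_eq_abs, abs_of_nonneg ENNReal.toReal_nonneg]
    have : ρ {a : ℝ | t ≤ f a} ≤ 1 := (measure_mono (Set.subset_univ _)).trans_eq measure_univ
    exact ENNReal.toReal_le_of_le_ofReal zero_le_one (by simpa using this)
  simp only [measureReal_def]
  rw [← integral_sub (bdd1 ν inferInstance) (bdd1 μ inferInstance)]
  have key : ‖∫ t in Set.Ioc (0:ℝ) K,
      ((ν {a : ℝ | t ≤ f a}).toReal - (μ {a : ℝ | t ≤ f a}).toReal)‖ ≤
      ε * (volume (Set.Ioc (0:ℝ) K)).toReal := by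
    apply norm_setIntegral_le_of_norm_le_const measure_Ioc_lt_top
    · intro t ht
      rw [Real.norm_eq_abs]
      exact htv _ (hf measurableSet_Ici)
  rw [Real.volume_Ioc, sub_zero, ENNReal.toReal_ofReal hK] at key
  rw [Real.norm_eq_abs] at key
  linarith [key]

lemma aux_tv_bound_set (μ ν : Measure ℝ) [IsProbabilityMeasure μ] [IsProbabilityMeasure ν]
    (ε : ℝ) (htv : ∀ s : Set ℝ, MeasurableSet s → |(ν s).toReal - (μ s).toReal| ≤ ε)
    (s : Set ℝ) (hs : MeasurableSet s)
    (f : ℝ → ℝ) (hf : Measurable f) (hnn : ∀ x, 0 ≤ f x) (K : ℝ) (hK : 0 ≤ K)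
    (hbν : ∀ᵐ x ∂ν, f x ≤ K) (hbμ : ∀ᵐ x ∂μ, f x ≤ K) :
    |(∫ x in s, f x ∂ν) - ∫ x in s, f x ∂μ| ≤ K * ε := by
  have h1 : ∀ (ρ : Measure ℝ), ∫ x in s, f x ∂ρ = ∫ x, s.indicator f x ∂ρ := by
    intro ρ; rw [integral_indicator hs]
  rw [h1 ν, h1 μ]
  apply aux_tv_bound μ ν ε htv _ (hf.indicator hs)
    (fun x => Set.indicator_nonneg (fun y _ => hnn y) x) K hK
  · filter_upwards [hbν] with x hx
    by_cases hxs : x ∈ s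
    · rw [Set.indicator_of_mem hxs]; exact hx
    · rw [Set.indicator_of_notMem hxs]; exact hK
  · filter_upwards [hbμ] with x hx
    by_cases hxs : x ∈ s
    · rw [Set.indicator_of_mem hxs]; exact hx
    · rw [Set.indicator_of_notMem hxs]; exact hK

noncomputable def gp (ℓp ℓm : ℝ → ℝ) (c : ℝ) : ℝ → ℝ :=
  fun x => if x ≤ c then extAbs ℓp (c - x) else -extLd ℓp ℓm (x - c)

noncomputable def gm (ℓp ℓm : ℝ → ℝ) (c : ℝ) : ℝ → ℝ :=
  fun x => if c ≤ x then extAbs ℓp (x - c) else -extLd ℓp ℓm (c - x)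

section Aux3

variable {ℓ ℓp ℓm : ℝ → ℝ} {A B c : ℝ}
variable (h_convex : ConvexOn ℝ (Set.Ici 0) ℓ)
variable (h_smono : StrictMonoOn ℓ (Set.Ici 0))
variable (h_nonneg : ∀ z ∈ Set.Ici (0 : ℝ), 0 ≤ ℓ z)
variable (h_right : ∀ z, 0 ≤ z → HasDerivWithinAt ℓ (ℓp z) (Set.Ici z) z)
variable (h_left : ∀ z, 0 < z → HasDerivWithinAt ℓ (ℓm z) (Set.Iic z) z)
variable (hAB : A < B) (hc : c ∈ Set.Ioo A B)

include h_convex h_smono h_right h_left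

lemma gp_measurable : Measurable (gp ℓp ℓm c) := by
  unfold gp
  apply Measurable.ite measurableSet_Iic
  · exact ((extAbs_rd_mono h_convex h_right h_left).measurable).comp
      (measurable_const.sub measurable_id)
  · exact (((extLd_mono h_convex h_right h_left).measurable).comp
      (measurable_id.sub measurable_const)).neg

lemma gm_measurable : Measurable (gm ℓp ℓm c) := by
  unfold gm
  apply Measurable.ite measurableSet_Ici
  · exact ((extAbs_rd_mono h_convex h_right h_left).measurable).comp
      (measurable_id.sub measurable_const)
  · exact (((extLd_mono h_convex h_right h_left).measurable).comp
      (measurable_const.sub measurable_id)).neg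

include h_nonneg hAB hc

lemma gp_bound : ∀ x ∈ Set.Icc A B, |gp ℓp ℓm c x| ≤ ℓp (B - A + 1) := by
  intro x hx
  obtain ⟨hxA, hxB⟩ := hx
  obtain ⟨hcA, hcB⟩ := hc
  have hM : (0:ℝ) ≤ B - A + 1 := by linarith
  unfold gp
  split_ifs with h
  · rw [abs_of_nonneg (extAbs_rd_nonneg h_convex h_smono h_right _)]
    exact extAbs_rd_le h_convex h_right h_left hM (by linarith)
  · rw [abs_neg, abs_of_nonneg (extLd_nonneg h_convex h_smono h_right h_left _)]
    exact extLd_le h_convex h_right h_left hM (by linarith)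

lemma gm_bound : ∀ x ∈ Set.Icc A B, |gm ℓp ℓm c x| ≤ ℓp (B - A + 1) := by
  intro x hx
  obtain ⟨hxA, hxB⟩ := hx
  obtain ⟨hcA, hcB⟩ := hc
  have hM : (0:ℝ) ≤ B - A + 1 := by linarith
  unfold gm
  split_ifs with h
  · rw [abs_of_nonneg (extAbs_rd_nonneg h_convex h_smono h_right _)]
    exact extAbs_rd_le h_convex h_right h_left hM (by linarith)
  · rw [abs_neg, abs_of_nonneg (extLd_nonneg h_convex h_smono h_right h_left _)]
    exact extLd_le h_convex h_right h_left hM (by linarith)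

lemma gp_integral (ν : Measure ℝ) [IsProbabilityMeasure ν] (hν : ν (Set.Icc A B) = 1) :
    ∫ x, gp ℓp ℓm c x ∂ν =
      (∫ x in Set.Iic c, ℓp (c - x) ∂ν) - ∫ x in Set.Ioi c, ℓm (x - c) ∂ν := by
  have hint : Integrable (gp ℓp ℓm c) ν :=
    aux_integrable ν hν _ (gp_measurable h_convex h_smono h_right h_left) _
      (gp_bound h_convex h_smono h_nonneg h_right h_left hAB hc)
  have hsplit := integral_add_compl (measurableSet_Iic (a := c)) hint
  rw [Set.compl_Iic] at hsplit
  have e1 : ∫ x in Set.Iic c, gp ℓp ℓm c x ∂ν = ∫ x in Set.Iic c, ℓp (c - x) ∂ν := by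
    apply setIntegral_congr_fun measurableSet_Iic
    intro x hx
    simp only [gp]
    have hx2 : x ≤ c := hx
    rw [if_pos hx2, extAbs_of_nonneg _ (sub_nonneg.mpr hx2)]
  have e2 : ∫ x in Set.Ioi c, gp ℓp ℓm c x ∂ν = -∫ x in Set.Ioi c, ℓm (x - c) ∂ν := by
    rw [← integral_neg]
    apply setIntegral_congr_fun measurableSet_Ioi
    intro x hx
    have hx' : c < x := hx
    simp only [gp]
    rw [if_neg (not_le.mpr hx'), extLd_of_pos _ _ (by linarith : (0:ℝ) < x - c)]
  rw [e1, e2] at hsplit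
  linarith

lemma gm_integral (ν : Measure ℝ) [IsProbabilityMeasure ν] (hν : ν (Set.Icc A B) = 1) :
    ∫ x, gm ℓp ℓm c x ∂ν =
      (∫ x in Set.Ici c, ℓp (x - c) ∂ν) - ∫ x in Set.Iio c, ℓm (c - x) ∂ν := by
  have hint : Integrable (gm ℓp ℓm c) ν :=
    aux_integrable ν hν _ (gm_measurable h_convex h_smono h_right h_left) _
      (gm_bound h_convex h_smono h_nonneg h_right h_left hAB hc)
  have hsplit := integral_add_compl (measurableSet_Ici (a := c)) hint
  rw [Set.compl_Ici] at hsplit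
  have e1 : ∫ x in Set.Ici c, gm ℓp ℓm c x ∂ν = ∫ x in Set.Ici c, ℓp (x - c) ∂ν := by
    apply setIntegral_congr_fun measurableSet_Ici
    intro x hx
    simp only [gm]
    have hx2 : c ≤ x := hx
    rw [if_pos hx2, extAbs_of_nonneg _ (sub_nonneg.mpr hx2)]
  have e2 : ∫ x in Set.Iio c, gm ℓp ℓm c x ∂ν = -∫ x in Set.Iio c, ℓm (c - x) ∂ν := by
    rw [← integral_neg]
    apply setIntegral_congr_fun measurableSet_Iio
    intro x hx
    have hx' : x < c := hx
    simp only [gm]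
    rw [if_neg (not_le.mpr hx'), extLd_of_pos _ _ (by linarith : (0:ℝ) < c - x)]
  rw [e1, e2] at hsplit
  linarith

lemma ell_integrable (ν : Measure ℝ) [IsProbabilityMeasure ν] (hν : ν (Set.Icc A B) = 1)
    (α : ℝ) : Integrable (fun x => ℓ |α - x|) ν := by
  have heq : (fun x => ℓ |α - x|) = fun x => extAbs ℓ |α - x| :=
    funext fun x => (extAbs_abs ℓ _).symm
  rw [heq]
  apply aux_integrable ν hν _ ?_ (ℓ (|α| + |A| + |B|)) ?_
  · exact ((extAbs_ell_mono h_smono).measurable).comp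
      ((measurable_const.sub measurable_id).abs)
  · intro x hx
    obtain ⟨hxA, hxB⟩ := hx
    have h0 : 0 ≤ extAbs ℓ |α - x| := h_nonneg _ (Set.mem_Ici.mpr (le_max_right _ _))
    rw [abs_of_nonneg h0]
    have habs : |α - x| ≤ |α| + |A| + |B| := by
      rw [abs_le]
      constructor
      · have h1 : x ≤ |B| := hxB.trans (le_abs_self B)
        have h2 : -α ≤ |α| := neg_le_abs α
        have := abs_nonneg A
        linarith
      · have h1 : -|A| ≤ x := (neg_abs_le A).trans hxA
        have h2 : α ≤ |α| := le_abs_self α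
        have := abs_nonneg B
        linarith
    calc extAbs ℓ |α - x| ≤ extAbs ℓ (|α| + |A| + |B|) := extAbs_ell_mono h_smono habs
      _ = ℓ (|α| + |A| + |B|) := extAbs_of_nonneg _ ((abs_nonneg _).trans
          (by linarith [abs_nonneg (α:ℝ), abs_nonneg A, abs_nonneg B, le_abs_self (|α| + |A|)] : |α| ≤ |α| + |A| + |B|))

lemma phi_lower_plus (ν : Measure ℝ) [IsProbabilityMeasure ν] (hν : ν (Set.Icc A B) = 1)
    {β : ℝ} (hcβ : c < β) :
    (β - c) * ((∫ x in Set.Iic c, ℓp (c - x) ∂ν) - ∫ x in Set.Ioi c, ℓm (x - c) ∂ν) ≤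
      (∫ x, ℓ |β - x| ∂ν) - ∫ x, ℓ |c - x| ∂ν := by
  rw [← gp_integral h_convex h_smono h_nonneg h_right h_left hAB hc ν hν]
  have hint_g : Integrable (gp ℓp ℓm c) ν :=
    aux_integrable ν hν _ (gp_measurable h_convex h_smono h_right h_left) _
      (gp_bound h_convex h_smono h_nonneg h_right h_left hAB hc)
  have hintβ := ell_integrable h_convex h_smono h_nonneg h_right h_left hAB hc ν hν β
  have hintc := ell_integrable h_convex h_smono h_nonneg h_right h_left hAB hc ν hν c
  have hpt : ∀ x, (β - c) * gp ℓp ℓm c x ≤ ℓ |β - x| - ℓ |c - x| := by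
    intro x
    have h := aux_pointwise_plus h_convex h_smono h_right h_left hcβ x
    have heq : (if x ≤ c then ℓp (c - x) else -ℓm (x - c)) = gp ℓp ℓm c x := by
      unfold gp
      split_ifs with hxc
      · exact (extAbs_of_nonneg _ (by linarith)).symm
      · rw [extLd_of_pos _ _ (by push_neg at hxc; linarith : (0:ℝ) < x - c)]
    rw [heq] at h
    exact h
  calc (β - c) * ∫ x, gp ℓp ℓm c x ∂ν = ∫ x, (β - c) * gp ℓp ℓm c x ∂ν := by
        rw [integral_const_mul]
    _ ≤ ∫ x, (ℓ |β - x| - ℓ |c - x|) ∂ν :=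
        integral_mono (hint_g.const_mul _) (hintβ.sub hintc) hpt
    _ = (∫ x, ℓ |β - x| ∂ν) - ∫ x, ℓ |c - x| ∂ν := integral_sub hintβ hintc

lemma phi_lower_minus (ν : Measure ℝ) [IsProbabilityMeasure ν] (hν : ν (Set.Icc A B) = 1)
    {β : ℝ} (hβc : β < c) :
    (c - β) * ((∫ x in Set.Ici c, ℓp (x - c) ∂ν) - ∫ x in Set.Iio c, ℓm (c - x) ∂ν) ≤
      (∫ x, ℓ |β - x| ∂ν) - ∫ x, ℓ |c - x| ∂ν := by
  rw [← gm_integral h_convex h_smono h_nonneg h_right h_left hAB hc ν hν]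
  have hint_g : Integrable (gm ℓp ℓm c) ν :=
    aux_integrable ν hν _ (gm_measurable h_convex h_smono h_right h_left) _
      (gm_bound h_convex h_smono h_nonneg h_right h_left hAB hc)
  have hintβ := ell_integrable h_convex h_smono h_nonneg h_right h_left hAB hc ν hν β
  have hintc := ell_integrable h_convex h_smono h_nonneg h_right h_left hAB hc ν hν c
  have hpt : ∀ x, (c - β) * gm ℓp ℓm c x ≤ ℓ |β - x| - ℓ |c - x| := by
    intro x
    have h := aux_pointwise_minus h_convex h_smono h_right h_left hβc x
    have heq : (if c ≤ x then ℓp (x - c) else -ℓm (c - x)) = gm ℓp ℓm c x := by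
      unfold gm
      split_ifs with hxc
      · exact (extAbs_of_nonneg _ (by linarith)).symm
      · rw [extLd_of_pos _ _ (by push_neg at hxc; linarith : (0:ℝ) < c - x)]
    rw [heq] at h
    exact h
  calc (c - β) * ∫ x, gm ℓp ℓm c x ∂ν = ∫ x, (c - β) * gm ℓp ℓm c x ∂ν := by
        rw [integral_const_mul]
    _ ≤ ∫ x, (ℓ |β - x| - ℓ |c - x|) ∂ν :=
        integral_mono (hint_g.const_mul _) (hintβ.sub hintc) hpt
    _ = (∫ x, ℓ |β - x| ∂ν) - ∫ x, ℓ |c - x| ∂ν := integral_sub hintβ hintc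

lemma tendsto_Dp (ν : Measure ℝ) [IsProbabilityMeasure ν] (hν : ν (Set.Icc A B) = 1) :
    Filter.Tendsto
      (fun n : ℕ => ∫ x, ((n:ℝ)+1) * (ℓ |(c + 1/((n:ℝ)+1)) - x| - ℓ |c - x|) ∂ν)
      Filter.atTop (𝓝 (∫ x, gp ℓp ℓm c x ∂ν)) := by
  obtain ⟨hcA, hcB⟩ := hc
  have hM : (0:ℝ) ≤ B - A + 1 := by linarith
  set K := ℓp (B - A + 1) with hKdef
  have hKnn : 0 ≤ K := aux_rd_nonneg h_convex h_smono h_right hM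
  apply tendsto_integral_of_dominated_convergence (fun _ => K) ?_ (integrable_const K) ?_ ?_
  · -- measurability
    intro n
    have heq : (fun x => ((n:ℝ)+1) * (ℓ |(c + 1/((n:ℝ)+1)) - x| - ℓ |c - x|)) =
        (fun x => ((n:ℝ)+1) * (extAbs ℓ |(c + 1/((n:ℝ)+1)) - x| - extAbs ℓ |c - x|)) :=
      funext fun x => by rw [extAbs_abs, extAbs_abs]
    rw [heq]
    exact (measurable_const.mul
      ((((extAbs_ell_mono h_smono).measurable).comp
          ((measurable_const.sub measurable_id).abs)).sub
        (((extAbs_ell_mono h_smono).measurable).comp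
          ((measurable_const.sub measurable_id).abs)))).aestronglyMeasurable
  · -- bound
    intro n
    filter_upwards [aux_ae_mem ν hν] with x hx
    obtain ⟨hxA, hxB⟩ := hx
    set t := 1/((n:ℝ)+1) with htdef
    have hn0 : (0:ℝ) ≤ (n:ℝ) := Nat.cast_nonneg n
    have htpos : 0 < t := by positivity
    have ht1 : t ≤ 1 := by
      rw [htdef, div_le_one (by positivity)]; linarith
    have hmul : ((n:ℝ)+1) * t = 1 := by rw [htdef]; field_simp
    rw [Real.norm_eq_abs]
    by_cases hxc : x ≤ c
    · have habs1 : |c + t - x| = (c - x) + t := by rw [abs_of_nonneg (by linarith)]; ring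
      have habs2 : |c - x| = c - x := abs_of_nonneg (by linarith)
      rw [habs1, habs2]
      have hslope := aux_slope_le_ld h_convex h_left
        (by linarith : (0:ℝ) ≤ c - x) (by linarith : c - x < c - x + t)
      have hden : c - x + t - (c - x) = t := by ring
      rw [hden] at hslope
      have h1 := (div_le_iff₀ htpos).mp hslope
      have h2 : ℓm (c - x + t) ≤ K :=
        (aux_ld_le_rd h_convex h_right h_left (by linarith)).trans
          (aux_rd_mono h_convex h_right h_left (by linarith) (by linarith))
      have h3 : ℓ (c - x) ≤ ℓ (c - x + t) := aux_ell_mono h_smono _ _ (by linarith) (by linarith)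
      have h4 : ℓ (c - x + t) - ℓ (c - x) ≤ K * t :=
        h1.trans (mul_le_mul_of_nonneg_right h2 htpos.le)
      have h5 : ((n:ℝ)+1) * (ℓ (c - x + t) - ℓ (c - x)) ≤ ((n:ℝ)+1) * (K * t) :=
        mul_le_mul_of_nonneg_left h4 (by positivity)
      have h6 : ((n:ℝ)+1) * (K * t) = K * (((n:ℝ)+1) * t) := by ring
      rw [hmul, mul_one] at h6
      rw [abs_of_nonneg (mul_nonneg (by positivity) (by linarith : (0:ℝ) ≤ ℓ (c - x + t) - ℓ (c - x)))]
      linarith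
    · push_neg at hxc
      by_cases hxct : x ≤ c + t
      · have habs1 : |c + t - x| = c + t - x := abs_of_nonneg (by linarith)
        have habs2 : |c - x| = x - c := by rw [abs_of_nonpos (by linarith)]; ring
        rw [habs1, habs2]
        have hb1 : ℓ 0 ≤ ℓ (c + t - x) := aux_ell_mono h_smono _ _ le_rfl (by linarith)
        have hb2 : ℓ (c + t - x) ≤ ℓ t := aux_ell_mono h_smono _ _ (by linarith) (by linarith)
        have hb3 : ℓ 0 ≤ ℓ (x - c) := aux_ell_mono h_smono _ _ le_rfl (by linarith)
        have hb4 : ℓ (x - c) ≤ ℓ t := aux_ell_mono h_smono _ _ (by linarith) (by linarith)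
        have hslope := aux_slope_le_ld h_convex h_left (le_refl (0:ℝ)) htpos
        rw [sub_zero] at hslope
        have h1 := (div_le_iff₀ htpos).mp hslope
        have h2 : ℓm t ≤ K :=
          (aux_ld_le_rd h_convex h_right h_left htpos).trans
            (aux_rd_mono h_convex h_right h_left htpos.le (by linarith))
        have habs : |ℓ (c + t - x) - ℓ (x - c)| ≤ ℓ t - ℓ 0 :=
          abs_sub_le_iff.mpr ⟨by linarith, by linarith⟩
        rw [abs_mul, abs_of_nonneg (by positivity : (0:ℝ) ≤ (n:ℝ)+1)]
        have h4 : ℓ t - ℓ 0 ≤ K * t := h1.trans (mul_le_mul_of_nonneg_right h2 htpos.le)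
        have h5 : ((n:ℝ)+1) * |ℓ (c + t - x) - ℓ (x - c)| ≤ ((n:ℝ)+1) * (K * t) :=
          mul_le_mul_of_nonneg_left (habs.trans h4) (by positivity)
        have h6 : ((n:ℝ)+1) * (K * t) = K * (((n:ℝ)+1) * t) := by ring
        rw [hmul, mul_one] at h6
        linarith
      · push_neg at hxct
        have habs1 : |c + t - x| = x - c - t := by rw [abs_of_nonpos (by linarith)]; ring
        have habs2 : |c - x| = x - c := by rw [abs_of_nonpos (by linarith)]; ring
        rw [habs1, habs2]
        have hslope := aux_slope_le_ld h_convex h_left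
          (by linarith : (0:ℝ) ≤ x - c - t) (by linarith : x - c - t < x - c)
        have hden : x - c - (x - c - t) = t := by ring
        rw [hden] at hslope
        have h1 := (div_le_iff₀ htpos).mp hslope
        have h2 : ℓm (x - c) ≤ K :=
          (aux_ld_le_rd h_convex h_right h_left (by linarith)).trans
            (aux_rd_mono h_convex h_right h_left (by linarith) (by linarith))
        have h3 : ℓ (x - c - t) ≤ ℓ (x - c) := aux_ell_mono h_smono _ _ (by linarith) (by linarith)
        have h4 : ℓ (x - c) - ℓ (x - c - t) ≤ K * t :=
          h1.trans (mul_le_mul_of_nonneg_right h2 htpos.le)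
        have h5 : ((n:ℝ)+1) * (ℓ (x - c) - ℓ (x - c - t)) ≤ ((n:ℝ)+1) * (K * t) :=
          mul_le_mul_of_nonneg_left h4 (by positivity)
        have h6 : ((n:ℝ)+1) * (K * t) = K * (((n:ℝ)+1) * t) := by ring
        rw [hmul, mul_one] at h6
        rw [abs_mul, abs_of_nonneg (by positivity : (0:ℝ) ≤ (n:ℝ)+1),
          abs_of_nonpos (by linarith : ℓ (x - c - t) - ℓ (x - c) ≤ 0)]
        linarith
  · -- pointwise limit
    apply Filter.Eventually.of_forall
    intro x
    by_cases hxc : x ≤ c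
    · have hy : 0 ≤ c - x := by linarith
      have hslope := hasDerivWithinAt_iff_tendsto_slope.mp (h_right (c - x) hy)
      rw [Set.Ici_sdiff_left] at hslope
      have hw : Filter.Tendsto (fun n : ℕ => (c - x) + 1/((n:ℝ)+1)) Filter.atTop
          (𝓝[>] (c - x)) := by
        apply tendsto_nhdsWithin_of_tendsto_nhds_of_eventually_within
        · have h0 := tendsto_one_div_add_atTop_nhds_zero_nat (𝕜 := ℝ)
          have := h0.const_add (c - x)
          simpa using this
        · apply Filter.Eventually.of_forall
          intro n
          have : (0:ℝ) < 1/((n:ℝ)+1) := by positivity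
          exact Set.mem_Ioi.mpr (by linarith)
      have hcomp := hslope.comp hw
      have hgp : gp ℓp ℓm c x = ℓp (c - x) := by
        unfold gp; rw [if_pos hxc, extAbs_of_nonneg _ hy]
      rw [hgp]
      apply hcomp.congr
      intro n
      have htpos : (0:ℝ) < 1/((n:ℝ)+1) := by positivity
      have e1 : c + 1/((n:ℝ)+1) - x = (c - x) + 1/((n:ℝ)+1) := by ring
      simp only [Function.comp_apply]
      rw [slope_def_field, e1, abs_of_nonneg (by linarith), abs_of_nonneg hy]
      field_simp
      ring
    · push_neg at hxc
      have hz : 0 < x - c := by linarith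
      have hslope := hasDerivWithinAt_iff_tendsto_slope.mp (h_left (x - c) hz)
      rw [Set.Iic_diff_right] at hslope
      have hw : Filter.Tendsto (fun n : ℕ => (x - c) - 1/((n:ℝ)+1)) Filter.atTop
          (𝓝[<] (x - c)) := by
        apply tendsto_nhdsWithin_of_tendsto_nhds_of_eventually_within
        · have h0 := tendsto_one_div_add_atTop_nhds_zero_nat (𝕜 := ℝ)
          have := h0.const_sub (x - c)
          simpa using this
        · apply Filter.Eventually.of_forall
          intro n
          have : (0:ℝ) < 1/((n:ℝ)+1) := by positivity
          exact Set.mem_Iio.mpr (by linarith)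
      have hcomp := (hslope.comp hw).neg
      have hgp : gp ℓp ℓm c x = -ℓm (x - c) := by
        unfold gp; rw [if_neg (not_le.mpr hxc), extLd_of_pos _ _ hz]
      rw [hgp]
      have hev : ∀ᶠ n : ℕ in Filter.atTop, 1/((n:ℝ)+1) < x - c :=
        tendsto_one_div_add_atTop_nhds_zero_nat.eventually_lt_const hz
      apply Filter.Tendsto.congr' _ hcomp
      filter_upwards [hev] with n hn
      have htpos : (0:ℝ) < 1/((n:ℝ)+1) := by positivity
      simp only [Function.comp_apply, Pi.neg_apply]
      rw [slope_def_field]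
      have e1 : |c + 1/((n:ℝ)+1) - x| = (x - c) - 1/((n:ℝ)+1) := by
        rw [abs_of_nonpos (by linarith)]; ring
      have e2 : |c - x| = x - c := by rw [abs_of_nonpos (by linarith)]; ring
      rw [e1, e2]
      field_simp
      ring

lemma tendsto_Dm (ν : Measure ℝ) [IsProbabilityMeasure ν] (hν : ν (Set.Icc A B) = 1) :
    Filter.Tendsto
      (fun n : ℕ => ∫ x, ((n:ℝ)+1) * (ℓ |(c - 1/((n:ℝ)+1)) - x| - ℓ |c - x|) ∂ν)
      Filter.atTop (𝓝 (∫ x, gm ℓp ℓm c x ∂ν)) := by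
  obtain ⟨hcA, hcB⟩ := hc
  have hM : (0:ℝ) ≤ B - A + 1 := by linarith
  set K := ℓp (B - A + 1) with hKdef
  have hKnn : 0 ≤ K := aux_rd_nonneg h_convex h_smono h_right hM
  apply tendsto_integral_of_dominated_convergence (fun _ => K) ?_ (integrable_const K) ?_ ?_
  · intro n
    have heq : (fun x => ((n:ℝ)+1) * (ℓ |(c - 1/((n:ℝ)+1)) - x| - ℓ |c - x|)) =
        (fun x => ((n:ℝ)+1) * (extAbs ℓ |(c - 1/((n:ℝ)+1)) - x| - extAbs ℓ |c - x|)) :=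
      funext fun x => by rw [extAbs_abs, extAbs_abs]
    rw [heq]
    exact (measurable_const.mul
      ((((extAbs_ell_mono h_smono).measurable).comp
          ((measurable_const.sub measurable_id).abs)).sub
        (((extAbs_ell_mono h_smono).measurable).comp
          ((measurable_const.sub measurable_id).abs)))).aestronglyMeasurable
  · intro n
    filter_upwards [aux_ae_mem ν hν] with x hx
    obtain ⟨hxA, hxB⟩ := hx
    set t := 1/((n:ℝ)+1) with htdef
    have hn0 : (0:ℝ) ≤ (n:ℝ) := Nat.cast_nonneg n
    have htpos : 0 < t := by positivity
    have ht1 : t ≤ 1 := by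
      rw [htdef, div_le_one (by positivity)]; linarith
    have hmul : ((n:ℝ)+1) * t = 1 := by rw [htdef]; field_simp
    rw [Real.norm_eq_abs]
    by_cases hxc : c ≤ x
    · have habs1 : |c - t - x| = (x - c) + t := by rw [abs_of_nonpos (by linarith)]; ring
      have habs2 : |c - x| = x - c := by rw [abs_of_nonpos (by linarith)]; ring
      rw [habs1, habs2]
      have hslope := aux_slope_le_ld h_convex h_left
        (by linarith : (0:ℝ) ≤ x - c) (by linarith : x - c < x - c + t)
      have hden : x - c + t - (x - c) = t := by ring
      rw [hden] at hslope
      have h1 := (div_le_iff₀ htpos).mp hslope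
      have h2 : ℓm (x - c + t) ≤ K :=
        (aux_ld_le_rd h_convex h_right h_left (by linarith)).trans
          (aux_rd_mono h_convex h_right h_left (by linarith) (by linarith))
      have h3 : ℓ (x - c) ≤ ℓ (x - c + t) := aux_ell_mono h_smono _ _ (by linarith) (by linarith)
      have h4 : ℓ (x - c + t) - ℓ (x - c) ≤ K * t :=
        h1.trans (mul_le_mul_of_nonneg_right h2 htpos.le)
      have h5 : ((n:ℝ)+1) * (ℓ (x - c + t) - ℓ (x - c)) ≤ ((n:ℝ)+1) * (K * t) :=
        mul_le_mul_of_nonneg_left h4 (by positivity)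
      have h6 : ((n:ℝ)+1) * (K * t) = K * (((n:ℝ)+1) * t) := by ring
      rw [hmul, mul_one] at h6
      rw [abs_of_nonneg (mul_nonneg (by positivity)
        (by linarith : (0:ℝ) ≤ ℓ (x - c + t) - ℓ (x - c)))]
      linarith
    · push_neg at hxc
      by_cases hxct : c - t ≤ x
      · have habs1 : |c - t - x| = x - c + t := by rw [abs_of_nonpos (by linarith)]; ring
        have habs2 : |c - x| = c - x := abs_of_nonneg (by linarith)
        rw [habs1, habs2]
        have hb1 : ℓ 0 ≤ ℓ (x - c + t) := aux_ell_mono h_smono _ _ le_rfl (by linarith)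
        have hb2 : ℓ (x - c + t) ≤ ℓ t := aux_ell_mono h_smono _ _ (by linarith) (by linarith)
        have hb3 : ℓ 0 ≤ ℓ (c - x) := aux_ell_mono h_smono _ _ le_rfl (by linarith)
        have hb4 : ℓ (c - x) ≤ ℓ t := aux_ell_mono h_smono _ _ (by linarith) (by linarith)
        have hslope := aux_slope_le_ld h_convex h_left (le_refl (0:ℝ)) htpos
        rw [sub_zero] at hslope
        have h1 := (div_le_iff₀ htpos).mp hslope
        have h2 : ℓm t ≤ K :=
          (aux_ld_le_rd h_convex h_right h_left htpos).trans
            (aux_rd_mono h_convex h_right h_left htpos.le (by linarith))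
        have habs : |ℓ (x - c + t) - ℓ (c - x)| ≤ ℓ t - ℓ 0 :=
          abs_sub_le_iff.mpr ⟨by linarith, by linarith⟩
        rw [abs_mul, abs_of_nonneg (by positivity : (0:ℝ) ≤ (n:ℝ)+1)]
        have h4 : ℓ t - ℓ 0 ≤ K * t := h1.trans (mul_le_mul_of_nonneg_right h2 htpos.le)
        have h5 : ((n:ℝ)+1) * |ℓ (x - c + t) - ℓ (c - x)| ≤ ((n:ℝ)+1) * (K * t) :=
          mul_le_mul_of_nonneg_left (habs.trans h4) (by positivity)
        have h6 : ((n:ℝ)+1) * (K * t) = K * (((n:ℝ)+1) * t) := by ring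
        rw [hmul, mul_one] at h6
        linarith
      · push_neg at hxct
        have habs1 : |c - t - x| = c - x - t := by rw [abs_of_nonneg (by linarith)]; ring
        have habs2 : |c - x| = c - x := abs_of_nonneg (by linarith)
        rw [habs1, habs2]
        have hslope := aux_slope_le_ld h_convex h_left
          (by linarith : (0:ℝ) ≤ c - x - t) (by linarith : c - x - t < c - x)
        have hden : c - x - (c - x - t) = t := by ring
        rw [hden] at hslope
        have h1 := (div_le_iff₀ htpos).mp hslope
        have h2 : ℓm (c - x) ≤ K :=
          (aux_ld_le_rd h_convex h_right h_left (by linarith)).trans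
            (aux_rd_mono h_convex h_right h_left (by linarith) (by linarith))
        have h3 : ℓ (c - x - t) ≤ ℓ (c - x) := aux_ell_mono h_smono _ _ (by linarith) (by linarith)
        have h4 : ℓ (c - x) - ℓ (c - x - t) ≤ K * t :=
          h1.trans (mul_le_mul_of_nonneg_right h2 htpos.le)
        have h5 : ((n:ℝ)+1) * (ℓ (c - x) - ℓ (c - x - t)) ≤ ((n:ℝ)+1) * (K * t) :=
          mul_le_mul_of_nonneg_left h4 (by positivity)
        have h6 : ((n:ℝ)+1) * (K * t) = K * (((n:ℝ)+1) * t) := by ring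
        rw [hmul, mul_one] at h6
        rw [abs_mul, abs_of_nonneg (by positivity : (0:ℝ) ≤ (n:ℝ)+1),
          abs_of_nonpos (by linarith : ℓ (c - x - t) - ℓ (c - x) ≤ 0)]
        linarith
  · apply Filter.Eventually.of_forall
    intro x
    by_cases hxc : c ≤ x
    · have hy : 0 ≤ x - c := by linarith
      have hslope := hasDerivWithinAt_iff_tendsto_slope.mp (h_right (x - c) hy)
      rw [Set.Ici_sdiff_left] at hslope
      have hw : Filter.Tendsto (fun n : ℕ => (x - c) + 1/((n:ℝ)+1)) Filter.atTop
          (𝓝[>] (x - c)) := by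
        apply tendsto_nhdsWithin_of_tendsto_nhds_of_eventually_within
        · have h0 := tendsto_one_div_add_atTop_nhds_zero_nat (𝕜 := ℝ)
          have := h0.const_add (x - c)
          simpa using this
        · apply Filter.Eventually.of_forall
          intro n
          have : (0:ℝ) < 1/((n:ℝ)+1) := by positivity
          exact Set.mem_Ioi.mpr (by linarith)
      have hcomp := hslope.comp hw
      have hgm : gm ℓp ℓm c x = ℓp (x - c) := by
        unfold gm; rw [if_pos hxc, extAbs_of_nonneg _ hy]
      rw [hgm]
      apply hcomp.congr
      intro n
      have htpos : (0:ℝ) < 1/((n:ℝ)+1) := by positivity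
      simp only [Function.comp_apply]
      have e1 : |c - 1/((n:ℝ)+1) - x| = (x - c) + 1/((n:ℝ)+1) := by
        rw [abs_of_nonpos (by linarith)]; ring
      have e2 : |c - x| = x - c := by rw [abs_of_nonpos (by linarith)]; ring
      rw [slope_def_field, e1, e2]
      field_simp
      ring
    · push_neg at hxc
      have hz : 0 < c - x := by linarith
      have hslope := hasDerivWithinAt_iff_tendsto_slope.mp (h_left (c - x) hz)
      rw [Set.Iic_diff_right] at hslope
      have hw : Filter.Tendsto (fun n : ℕ => (c - x) - 1/((n:ℝ)+1)) Filter.atTop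
          (𝓝[<] (c - x)) := by
        apply tendsto_nhdsWithin_of_tendsto_nhds_of_eventually_within
        · have h0 := tendsto_one_div_add_atTop_nhds_zero_nat (𝕜 := ℝ)
          have := h0.const_sub (c - x)
          simpa using this
        · apply Filter.Eventually.of_forall
          intro n
          have : (0:ℝ) < 1/((n:ℝ)+1) := by positivity
          exact Set.mem_Iio.mpr (by linarith)
      have hcomp := (hslope.comp hw).neg
      have hgm : gm ℓp ℓm c x = -ℓm (c - x) := by
        unfold gm; rw [if_neg (not_le.mpr hxc), extLd_of_pos _ _ hz]
      rw [hgm]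
      have hev : ∀ᶠ n : ℕ in Filter.atTop, 1/((n:ℝ)+1) < c - x :=
        tendsto_one_div_add_atTop_nhds_zero_nat.eventually_lt_const hz
      apply Filter.Tendsto.congr' _ hcomp
      filter_upwards [hev] with n hn
      have htpos : (0:ℝ) < 1/((n:ℝ)+1) := by positivity
      simp only [Function.comp_apply, Pi.neg_apply]
      rw [slope_def_field]
      have e1 : |c - 1/((n:ℝ)+1) - x| = (c - x) - 1/((n:ℝ)+1) := by
        rw [abs_of_nonneg (by linarith)]; ring
      have e2 : |c - x| = c - x := abs_of_nonneg (by linarith)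
      rw [e1, e2]
      field_simp
      ring

omit h_convex h_smono h_nonneg h_right h_left hAB hc in
lemma conv1 (ν : Measure ℝ) :
    ∫ x in Set.Iic c, ℓp (c - x) ∂ν = ∫ x in Set.Iic c, extAbs ℓp (c - x) ∂ν :=
  setIntegral_congr_fun measurableSet_Iic
    (fun x hx => (extAbs_of_nonneg _ (sub_nonneg.mpr (hx : x ≤ c))).symm)

omit h_convex h_smono h_nonneg h_right h_left hAB hc in
lemma conv2 (ν : Measure ℝ) :
    ∫ x in Set.Ioi c, ℓm (x - c) ∂ν = ∫ x in Set.Ioi c, extLd ℓp ℓm (x - c) ∂ν :=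
  setIntegral_congr_fun measurableSet_Ioi
    (fun x hx => (extLd_of_pos _ _ (sub_pos.mpr (hx : c < x))).symm)

omit h_convex h_smono h_nonneg h_right h_left hAB hc in
lemma conv3 (ν : Measure ℝ) :
    ∫ x in Set.Ici c, ℓp (x - c) ∂ν = ∫ x in Set.Ici c, extAbs ℓp (x - c) ∂ν :=
  setIntegral_congr_fun measurableSet_Ici
    (fun x hx => (extAbs_of_nonneg _ (sub_nonneg.mpr (hx : c ≤ x))).symm)

omit h_convex h_smono h_nonneg h_right h_left hAB hc in
lemma conv4 (ν : Measure ℝ) :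
    ∫ x in Set.Iio c, ℓm (c - x) ∂ν = ∫ x in Set.Iio c, extLd ℓp ℓm (c - x) ∂ν :=
  setIntegral_congr_fun measurableSet_Iio
    (fun x hx => (extLd_of_pos _ _ (sub_pos.mpr (hx : x < c))).symm)

lemma Dp_close (μ ν : Measure ℝ) [IsProbabilityMeasure μ] [IsProbabilityMeasure ν]
    (hμ : μ (Set.Icc A B) = 1) (hν : ν (Set.Icc A B) = 1)
    (ε : ℝ) (htv : ∀ s : Set ℝ, MeasurableSet s → |(ν s).toReal - (μ s).toReal| ≤ ε) :
    |((∫ x in Set.Iic c, ℓp (c - x) ∂ν) - ∫ x in Set.Ioi c, ℓm (x - c) ∂ν) -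
      ((∫ x in Set.Iic c, ℓp (c - x) ∂μ) - ∫ x in Set.Ioi c, ℓm (x - c) ∂μ)| ≤
      2 * (ℓp (B - A + 1) * ε) := by
  obtain ⟨hcA, hcB⟩ := hc
  have hM : (0:ℝ) ≤ B - A + 1 := by linarith
  have hK : 0 ≤ ℓp (B - A + 1) := aux_rd_nonneg h_convex h_smono h_right hM
  rw [conv1 (ℓp := ℓp) ν, conv1 (ℓp := ℓp) μ, conv2 (ℓp := ℓp) (ℓm := ℓm) ν,
    conv2 (ℓp := ℓp) (ℓm := ℓm) μ]
  have h1 := aux_tv_bound_set μ ν ε htv (Set.Iic c) measurableSet_Iic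
    (fun x => extAbs ℓp (c - x))
    (((extAbs_rd_mono h_convex h_right h_left).measurable).comp
      (measurable_const.sub measurable_id))
    (fun x => extAbs_rd_nonneg h_convex h_smono h_right _) (ℓp (B - A + 1)) hK
    (by filter_upwards [aux_ae_mem ν hν] with x hx
        exact extAbs_rd_le h_convex h_right h_left hM (by obtain ⟨h1,h2⟩ := hx; linarith))
    (by filter_upwards [aux_ae_mem μ hμ] with x hx
        exact extAbs_rd_le h_convex h_right h_left hM (by obtain ⟨h1,h2⟩ := hx; linarith))
  have h2 := aux_tv_bound_set μ ν ε htv (Set.Ioi c) measurableSet_Ioi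
    (fun x => extLd ℓp ℓm (x - c))
    (((extLd_mono h_convex h_right h_left).measurable).comp
      (measurable_id.sub measurable_const))
    (fun x => extLd_nonneg h_convex h_smono h_right h_left _) (ℓp (B - A + 1)) hK
    (by filter_upwards [aux_ae_mem ν hν] with x hx
        exact extLd_le h_convex h_right h_left hM (by obtain ⟨h1,h2⟩ := hx; linarith))
    (by filter_upwards [aux_ae_mem μ hμ] with x hx
        exact extLd_le h_convex h_right h_left hM (by obtain ⟨h1,h2⟩ := hx; linarith))
  obtain ⟨h1a, h1b⟩ := abs_le.mp h1
  obtain ⟨h2a, h2b⟩ := abs_le.mp h2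
  rw [abs_le]
  constructor <;> nlinarith [hK, mul_nonneg hK (abs_nonneg ε)]

lemma Dm_close (μ ν : Measure ℝ) [IsProbabilityMeasure μ] [IsProbabilityMeasure ν]
    (hμ : μ (Set.Icc A B) = 1) (hν : ν (Set.Icc A B) = 1)
    (ε : ℝ) (htv : ∀ s : Set ℝ, MeasurableSet s → |(ν s).toReal - (μ s).toReal| ≤ ε) :
    |((∫ x in Set.Ici c, ℓp (x - c) ∂ν) - ∫ x in Set.Iio c, ℓm (c - x) ∂ν) -
      ((∫ x in Set.Ici c, ℓp (x - c) ∂μ) - ∫ x in Set.Iio c, ℓm (c - x) ∂μ)| ≤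
      2 * (ℓp (B - A + 1) * ε) := by
  obtain ⟨hcA, hcB⟩ := hc
  have hM : (0:ℝ) ≤ B - A + 1 := by linarith
  have hK : 0 ≤ ℓp (B - A + 1) := aux_rd_nonneg h_convex h_smono h_right hM
  rw [conv3 (ℓp := ℓp) ν, conv3 (ℓp := ℓp) μ, conv4 (ℓp := ℓp) (ℓm := ℓm) ν,
    conv4 (ℓp := ℓp) (ℓm := ℓm) μ]
  have h1 := aux_tv_bound_set μ ν ε htv (Set.Ici c) measurableSet_Ici
    (fun x => extAbs ℓp (x - c))
    (((extAbs_rd_mono h_convex h_right h_left).measurable).comp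
      (measurable_id.sub measurable_const))
    (fun x => extAbs_rd_nonneg h_convex h_smono h_right _) (ℓp (B - A + 1)) hK
    (by filter_upwards [aux_ae_mem ν hν] with x hx
        exact extAbs_rd_le h_convex h_right h_left hM (by obtain ⟨h1,h2⟩ := hx; linarith))
    (by filter_upwards [aux_ae_mem μ hμ] with x hx
        exact extAbs_rd_le h_convex h_right h_left hM (by obtain ⟨h1,h2⟩ := hx; linarith))
  have h2 := aux_tv_bound_set μ ν ε htv (Set.Iio c) measurableSet_Iio
    (fun x => extLd ℓp ℓm (c - x))
    (((extLd_mono h_convex h_right h_left).measurable).comp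
      (measurable_const.sub measurable_id))
    (fun x => extLd_nonneg h_convex h_smono h_right h_left _) (ℓp (B - A + 1)) hK
    (by filter_upwards [aux_ae_mem ν hν] with x hx
        exact extLd_le h_convex h_right h_left hM (by obtain ⟨h1,h2⟩ := hx; linarith))
    (by filter_upwards [aux_ae_mem μ hμ] with x hx
        exact extLd_le h_convex h_right h_left hM (by obtain ⟨h1,h2⟩ := hx; linarith))
  obtain ⟨h1a, h1b⟩ := abs_le.mp h1
  obtain ⟨h2a, h2b⟩ := abs_le.mp h2
  rw [abs_le]
  constructor <;> nlinarith [hK, mul_nonneg hK (abs_nonneg ε)]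

lemma exists_better_plus (ν : Measure ℝ) [IsProbabilityMeasure ν] (hν : ν (Set.Icc A B) = 1)
    (hneg : (∫ x in Set.Iic c, ℓp (c - x) ∂ν) - (∫ x in Set.Ioi c, ℓm (x - c) ∂ν) < 0) :
    ∃ β : ℝ, (∫ x, ℓ |β - x| ∂ν) < ∫ x, ℓ |c - x| ∂ν := by
  have ht := tendsto_Dp h_convex h_smono h_nonneg h_right h_left hAB hc ν hν
  rw [gp_integral h_convex h_smono h_nonneg h_right h_left hAB hc ν hν] at ht
  have hev := Filter.Tendsto.eventually_lt_const hneg ht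
  obtain ⟨n, hn⟩ := hev.exists
  refine ⟨c + 1/((n:ℝ)+1), ?_⟩
  rw [MeasureTheory.integral_const_mul,
    integral_sub (ell_integrable h_convex h_smono h_nonneg h_right h_left hAB hc ν hν _)
      (ell_integrable h_convex h_smono h_nonneg h_right h_left hAB hc ν hν c)] at hn
  have hpos : (0:ℝ) < (n:ℝ)+1 := by positivity
  nlinarith

lemma exists_better_minus (ν : Measure ℝ) [IsProbabilityMeasure ν] (hν : ν (Set.Icc A B) = 1)
    (hneg : (∫ x in Set.Ici c, ℓp (x - c) ∂ν) - (∫ x in Set.Iio c, ℓm (c - x) ∂ν) < 0) :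
    ∃ β : ℝ, (∫ x, ℓ |β - x| ∂ν) < ∫ x, ℓ |c - x| ∂ν := by
  have ht := tendsto_Dm h_convex h_smono h_nonneg h_right h_left hAB hc ν hν
  rw [gm_integral h_convex h_smono h_nonneg h_right h_left hAB hc ν hν] at ht
  have hev := Filter.Tendsto.eventually_lt_const hneg ht
  obtain ⟨n, hn⟩ := hev.exists
  refine ⟨c - 1/((n:ℝ)+1), ?_⟩
  rw [MeasureTheory.integral_const_mul,
    integral_sub (ell_integrable h_convex h_smono h_nonneg h_right h_left hAB hc ν hν _)
      (ell_integrable h_convex h_smono h_nonneg h_right h_left hAB hc ν hν c)] at hn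
  have hpos : (0:ℝ) < (n:ℝ)+1 := by positivity
  nlinarith

end Aux3

lemma aux_integrable_dirac (f : ℝ → ℝ) (y : ℝ) : Integrable f (Measure.dirac y) := by
  have h : f =ᵐ[Measure.dirac y] fun _ => f y := by
    rw [Filter.EventuallyEq, ae_dirac_eq]
    exact Filter.eventually_pure.mpr rfl
  exact (integrable_const (f y)).congr h.symm

lemma setint_perturb (μ : Measure ℝ) [IsProbabilityMeasure μ] (y : ℝ) (ε' : ℝ)
    (h0 : 0 ≤ ε') (h1 : ε' ≤ 1) (f : ℝ → ℝ) (hfi : Integrable f μ)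
    (s : Set ℝ) (hs : MeasurableSet s) :
    ∫ x in s, f x ∂(ENNReal.ofReal (1-ε') • μ + ENNReal.ofReal ε' • Measure.dirac y) =
    (1-ε') * ∫ x in s, f x ∂μ + ε' * (s.indicator f y) := by
  classical
  have hdint : Integrable f ((Measure.dirac y).restrict s) := by
    rw [restrict_dirac' hs]
    split_ifs
    · exact aux_integrable_dirac f y
    · exact integrable_zero_measure
  rw [Measure.restrict_add, Measure.restrict_smul, Measure.restrict_smul,
    integral_add_measure (hfi.restrict.smul_measure ENNReal.ofReal_ne_top)
      (hdint.smul_measure ENNReal.ofReal_ne_top),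
    integral_smul_measure, integral_smul_measure,
    ENNReal.toReal_ofReal (by linarith), ENNReal.toReal_ofReal h0,
    restrict_dirac' hs]
  congr 1
  split_ifs with hy
  · rw [integral_dirac, Set.indicator_of_mem hy, smul_eq_mul]
  · rw [Set.indicator_of_notMem hy]
    simp

lemma perturb_prob (μ : Measure ℝ) [IsProbabilityMeasure μ] (y ε' : ℝ)
    (h0 : 0 ≤ ε') (h1 : ε' ≤ 1) :
    IsProbabilityMeasure (ENNReal.ofReal (1-ε') • μ + ENNReal.ofReal ε' • Measure.dirac y) := by
  constructor
  rw [Measure.add_apply, Measure.smul_apply, Measure.smul_apply, smul_eq_mul, smul_eq_mul,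
    measure_univ, measure_univ, mul_one, mul_one,
    ← ENNReal.ofReal_add (by linarith) h0]
  norm_num

lemma perturb_supp {A B : ℝ} (μ : Measure ℝ) [IsProbabilityMeasure μ]
    (hμ : μ (Set.Icc A B) = 1) (y : ℝ) (hy : y ∈ Set.Icc A B) (ε' : ℝ)
    (h0 : 0 ≤ ε') (h1 : ε' ≤ 1) :
    (ENNReal.ofReal (1-ε') • μ + ENNReal.ofReal ε' • Measure.dirac y) (Set.Icc A B) = 1 := by
  rw [Measure.add_apply, Measure.smul_apply, Measure.smul_apply, smul_eq_mul, smul_eq_mul,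
    hμ, Measure.dirac_apply' _ measurableSet_Icc, Set.indicator_of_mem hy, Pi.one_apply, mul_one, mul_one,
    ← ENNReal.ofReal_add (by linarith) h0]
  norm_num

lemma perturb_tv (μ : Measure ℝ) [IsProbabilityMeasure μ] (y ε' ε : ℝ)
    (h0 : 0 ≤ ε') (h1 : ε' ≤ 1) (hle : ε' ≤ ε) :
    ∀ s : Set ℝ, MeasurableSet s →
      |(((ENNReal.ofReal (1-ε') • μ + ENNReal.ofReal ε' • Measure.dirac y) s).toReal -
        (μ s).toReal)| ≤ ε := by
  intro s _
  have hμ1 : (μ s).toReal ≤ 1 := by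
    have h := prob_le_one (μ := μ) (s := s)
    have := ENNReal.toReal_mono ENNReal.one_ne_top h
    simpa using this
  have hδ1 : ((Measure.dirac y) s).toReal ≤ 1 := by
    have h := prob_le_one (μ := Measure.dirac y) (s := s)
    have := ENNReal.toReal_mono ENNReal.one_ne_top h
    simpa using this
  have hμ0 : 0 ≤ (μ s).toReal := ENNReal.toReal_nonneg
  have hδ0 : 0 ≤ ((Measure.dirac y) s).toReal := ENNReal.toReal_nonneg
  have hνs : ((ENNReal.ofReal (1-ε') • μ + ENNReal.ofReal ε' • Measure.dirac y) s).toReal =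
      (1-ε') * (μ s).toReal + ε' * ((Measure.dirac y) s).toReal := by
    rw [Measure.add_apply, Measure.smul_apply, Measure.smul_apply, smul_eq_mul, smul_eq_mul,
      ENNReal.toReal_add (ENNReal.mul_ne_top ENNReal.ofReal_ne_top (measure_ne_top μ s))
        (ENNReal.mul_ne_top ENNReal.ofReal_ne_top (measure_ne_top _ s)),
      ENNReal.toReal_mul, ENNReal.toReal_mul,
      ENNReal.toReal_ofReal (by linarith), ENNReal.toReal_ofReal h0]
  rw [hνs, show (1-ε') * (μ s).toReal + ε' * ((Measure.dirac y) s).toReal - (μ s).toReal =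
    ε' * (((Measure.dirac y) s).toReal - (μ s).toReal) from by ring,
    abs_mul, abs_of_nonneg h0]
  have habs : |((Measure.dirac y) s).toReal - (μ s).toReal| ≤ 1 :=
    abs_le.mpr ⟨by linarith, by linarith⟩
  nlinarith

/-- Robustness characterization of stickiness on the line: the one-sided derivatives
of the objective at `c` are both positive iff the minimizer set equals `{c}` for
every probability measure `ν` (supported in `[A,B]`) within total variation
distance `ε` of `μ`, for some `ε > 0`. -/
theorem stmt_11 (ℓ : ℝ → ℝ)
    (h_convex : ConvexOn ℝ (Set.Ici 0) ℓ)
    (h_smono : StrictMonoOn ℓ (Set.Ici 0))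
    (h_nonneg : ∀ z ∈ Set.Ici (0 : ℝ), 0 ≤ ℓ z)
    (ℓp ℓm : ℝ → ℝ)
    (h_right : ∀ z, 0 ≤ z → HasDerivWithinAt ℓ (ℓp z) (Set.Ici z) z)
    (h_left : ∀ z, 0 < z → HasDerivWithinAt ℓ (ℓm z) (Set.Iic z) z)
    (A B : ℝ) (hAB : A < B)
    (μ : Measure ℝ) [IsProbabilityMeasure μ] (hμsupp : μ (Set.Icc A B) = 1)
    (c : ℝ) (hc : c ∈ Set.Ioo A B) :
    ((0 < (∫ x in Set.Iic c, ℓp (c - x) ∂μ) - ∫ x in Set.Ioi c, ℓm (x - c) ∂μ) ∧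
     (0 < (∫ x in Set.Ici c, ℓp (x - c) ∂μ) - ∫ x in Set.Iio c, ℓm (c - x) ∂μ))
    ↔
    (∃ ε > (0 : ℝ), ∀ ν : Measure ℝ, IsProbabilityMeasure ν →
      ν (Set.Icc A B) = 1 →
      (∀ s : Set ℝ, MeasurableSet s → |(ν s).toReal - (μ s).toReal| ≤ ε) →
      {α : ℝ | ∀ β : ℝ, (∫ x, ℓ |α - x| ∂ν) ≤ ∫ x, ℓ |β - x| ∂ν} = {c}) := by
  obtain ⟨hcA, hcB⟩ := hc
  have hc : c ∈ Set.Ioo A B := ⟨hcA, hcB⟩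
  have hMnn : (0:ℝ) ≤ B - A + 1 := by linarith
  have hK : 0 ≤ ℓp (B - A + 1) := aux_rd_nonneg h_convex h_smono h_right hMnn
  set K := ℓp (B - A + 1) with hKdef
  constructor
  · rintro ⟨hp, hm⟩
    set d := min ((∫ x in Set.Iic c, ℓp (c - x) ∂μ) - ∫ x in Set.Ioi c, ℓm (x - c) ∂μ)
              ((∫ x in Set.Ici c, ℓp (x - c) ∂μ) - ∫ x in Set.Iio c, ℓm (c - x) ∂μ) with hd
    have hdpos : 0 < d := lt_min hp hm
    refine ⟨d / (4*K + 2), by positivity, ?_⟩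
    intro ν hνprob hνsupp htv
    haveI := hνprob
    have hclose_p := Dp_close h_convex h_smono h_nonneg h_right h_left hAB hc μ ν
      hμsupp hνsupp _ htv
    have hclose_m := Dm_close h_convex h_smono h_nonneg h_right h_left hAB hc μ ν
      hμsupp hνsupp _ htv
    have h42 : (0:ℝ) < 4*K+2 := by linarith
    have hb : 2*(K * (d/(4*K+2))) ≤ d/2 := by
      rw [show 2*(K*(d/(4*K+2))) = (2*K*d)/(4*K+2) from by ring,
        div_le_div_iff₀ h42 (by norm_num : (0:ℝ) < 2)]
      nlinarith
    have hDpν : 0 < (∫ x in Set.Iic c, ℓp (c - x) ∂ν) - ∫ x in Set.Ioi c, ℓm (x - c) ∂ν := by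
      obtain ⟨ha1, ha2⟩ := abs_le.mp hclose_p
      have hdle := min_le_left ((∫ x in Set.Iic c, ℓp (c - x) ∂μ) -
        ∫ x in Set.Ioi c, ℓm (x - c) ∂μ)
        ((∫ x in Set.Ici c, ℓp (x - c) ∂μ) - ∫ x in Set.Iio c, ℓm (c - x) ∂μ)
      rw [← hd] at hdle
      linarith
    have hDmν : 0 < (∫ x in Set.Ici c, ℓp (x - c) ∂ν) - ∫ x in Set.Iio c, ℓm (c - x) ∂ν := by
      obtain ⟨ha1, ha2⟩ := abs_le.mp hclose_m
      have hdle := min_le_right ((∫ x in Set.Iic c, ℓp (c - x) ∂μ) -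
        ∫ x in Set.Ioi c, ℓm (x - c) ∂μ)
        ((∫ x in Set.Ici c, ℓp (x - c) ∂μ) - ∫ x in Set.Iio c, ℓm (c - x) ∂μ)
      rw [← hd] at hdle
      linarith
    ext α
    simp only [Set.mem_setOf_eq, Set.mem_singleton_iff]
    constructor
    · intro hα
      by_contra hne
      rcases lt_or_gt_of_ne hne with hlt | hgt
      · have hineq := phi_lower_minus h_convex h_smono h_nonneg h_right h_left hAB hc ν
          hνsupp hlt
        have hcle := hα c
        nlinarith [mul_pos (sub_pos.mpr hlt) hDmν]
      · have hineq := phi_lower_plus h_convex h_smono h_nonneg h_right h_left hAB hc ν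
          hνsupp hgt
        have hcle := hα c
        nlinarith [mul_pos (sub_pos.mpr hgt) hDpν]
    · intro heqc
      intro β
      rw [heqc]
      rcases lt_trichotomy β c with hlt | heq | hgt
      · have hineq := phi_lower_minus h_convex h_smono h_nonneg h_right h_left hAB hc ν
          hνsupp hlt
        nlinarith [mul_pos (sub_pos.mpr hlt) hDmν]
      · rw [heq]
      · have hineq := phi_lower_plus h_convex h_smono h_nonneg h_right h_left hAB hc ν
          hνsupp hgt
        nlinarith [mul_pos (sub_pos.mpr hgt) hDpν]
  · rintro ⟨ε, hε, hset⟩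
    have hintp1 : Integrable (fun x => extAbs ℓp (c - x)) μ := by
      apply aux_integrable μ hμsupp _
        (((extAbs_rd_mono h_convex h_right h_left).measurable).comp
          (measurable_const.sub measurable_id)) K
      intro x hx
      obtain ⟨hx1, hx2⟩ := hx
      simp only [Function.comp_apply, id_eq]
      rw [abs_of_nonneg (extAbs_rd_nonneg h_convex h_smono h_right _)]
      exact extAbs_rd_le h_convex h_right h_left hMnn (by simp only [Pi.sub_apply, id_eq]; linarith)
    have hintm1 : Integrable (fun x => extLd ℓp ℓm (x - c)) μ := by
      apply aux_integrable μ hμsupp _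
        (((extLd_mono h_convex h_right h_left).measurable).comp
          (measurable_id.sub measurable_const)) K
      intro x hx
      obtain ⟨hx1, hx2⟩ := hx
      simp only [Function.comp_apply, id_eq]
      rw [abs_of_nonneg (extLd_nonneg h_convex h_smono h_right h_left _)]
      exact extLd_le h_convex h_right h_left hMnn (by simp only [Pi.sub_apply, id_eq]; linarith)
    have hintp2 : Integrable (fun x => extAbs ℓp (x - c)) μ := by
      apply aux_integrable μ hμsupp _
        (((extAbs_rd_mono h_convex h_right h_left).measurable).comp
          (measurable_id.sub measurable_const)) K
      intro x hx
      obtain ⟨hx1, hx2⟩ := hx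
      simp only [Function.comp_apply, id_eq]
      rw [abs_of_nonneg (extAbs_rd_nonneg h_convex h_smono h_right _)]
      exact extAbs_rd_le h_convex h_right h_left hMnn (by simp only [Pi.sub_apply, id_eq]; linarith)
    have hintm2 : Integrable (fun x => extLd ℓp ℓm (c - x)) μ := by
      apply aux_integrable μ hμsupp _
        (((extLd_mono h_convex h_right h_left).measurable).comp
          (measurable_const.sub measurable_id)) K
      intro x hx
      obtain ⟨hx1, hx2⟩ := hx
      simp only [Function.comp_apply, id_eq]
      rw [abs_of_nonneg (extLd_nonneg h_convex h_smono h_right h_left _)]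
      exact extLd_le h_convex h_right h_left hMnn (by simp only [Pi.sub_apply, id_eq]; linarith)
    set ε' := min ε (1/2) with hε'def
    have hε'pos : 0 < ε' := lt_min hε (by norm_num)
    have hε'le : ε' ≤ ε := min_le_left _ _
    have hε'half : ε' ≤ 1/2 := min_le_right _ _
    have hε'1 : ε' ≤ 1 := by linarith
    constructor
    · by_contra hcon
      push_neg at hcon
      set ν := ENNReal.ofReal (1-ε') • μ + ENNReal.ofReal ε' • Measure.dirac B with hνdef
      haveI hνprob : IsProbabilityMeasure ν := perturb_prob μ B ε' hε'pos.le hε'1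
      have hνsupp : ν (Set.Icc A B) = 1 :=
        perturb_supp μ hμsupp B ⟨hAB.le, le_refl B⟩ ε' hε'pos.le hε'1
      have htv := perturb_tv μ B ε' ε hε'pos.le hε'1 hε'le
      have hsetν := hset ν hνprob hνsupp htv
      have hcall : ∀ β, (∫ x, ℓ |c - x| ∂ν) ≤ ∫ x, ℓ |β - x| ∂ν := by
        have h1 : c ∈ ({c} : Set ℝ) := rfl
        rw [← hsetν] at h1
        exact h1
      have e1 : ∫ x in Set.Iic c, ℓp (c - x) ∂ν =
          (1-ε') * ∫ x in Set.Iic c, ℓp (c - x) ∂μ := by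
        rw [conv1 (ℓp := ℓp) ν, conv1 (ℓp := ℓp) μ, hνdef,
          setint_perturb μ B ε' hε'pos.le hε'1 _ hintp1 _ measurableSet_Iic,
          Set.indicator_of_notMem (by simpa using not_le.mpr hcB), mul_zero, add_zero]
      have e2 : ∫ x in Set.Ioi c, ℓm (x - c) ∂ν =
          (1-ε') * (∫ x in Set.Ioi c, ℓm (x - c) ∂μ) + ε' * extLd ℓp ℓm (B - c) := by
        rw [conv2 (ℓp := ℓp) (ℓm := ℓm) ν, conv2 (ℓp := ℓp) (ℓm := ℓm) μ, hνdef,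
          setint_perturb μ B ε' hε'pos.le hε'1 _ hintm1 _ measurableSet_Ioi,
          Set.indicator_of_mem (Set.mem_Ioi.mpr hcB)]
      have hml : extLd ℓp ℓm (B - c) = ℓm (B - c) := extLd_of_pos _ _ (by linarith)
      have hlmpos : 0 < ℓm (B - c) := aux_ld_pos h_convex h_smono h_left (by linarith)
      have hDpν : (∫ x in Set.Iic c, ℓp (c - x) ∂ν) - ∫ x in Set.Ioi c, ℓm (x - c) ∂ν < 0 := by
        rw [e1, e2, hml]
        have hfac : (0:ℝ) ≤ 1 - ε' := by linarith
        nlinarith [mul_nonneg hfac (neg_nonneg.mpr hcon), mul_pos hε'pos hlmpos]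
      obtain ⟨β, hβ⟩ := exists_better_plus h_convex h_smono h_nonneg h_right h_left hAB hc ν
        hνsupp hDpν
      exact absurd (hcall β) (not_le.mpr hβ)
    · by_contra hcon
      push_neg at hcon
      set ν := ENNReal.ofReal (1-ε') • μ + ENNReal.ofReal ε' • Measure.dirac A with hνdef
      haveI hνprob : IsProbabilityMeasure ν := perturb_prob μ A ε' hε'pos.le hε'1
      have hνsupp : ν (Set.Icc A B) = 1 :=
        perturb_supp μ hμsupp A ⟨le_refl A, hAB.le⟩ ε' hε'pos.le hε'1
      have htv := perturb_tv μ A ε' ε hε'pos.le hε'1 hε'le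
      have hsetν := hset ν hνprob hνsupp htv
      have hcall : ∀ β, (∫ x, ℓ |c - x| ∂ν) ≤ ∫ x, ℓ |β - x| ∂ν := by
        have h1 : c ∈ ({c} : Set ℝ) := rfl
        rw [← hsetν] at h1
        exact h1
      have e3 : ∫ x in Set.Ici c, ℓp (x - c) ∂ν =
          (1-ε') * ∫ x in Set.Ici c, ℓp (x - c) ∂μ := by
        rw [conv3 (ℓp := ℓp) ν, conv3 (ℓp := ℓp) μ, hνdef,
          setint_perturb μ A ε' hε'pos.le hε'1 _ hintp2 _ measurableSet_Ici,
          Set.indicator_of_notMem (by simpa using not_le.mpr hcA), mul_zero, add_zero]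
      have e4 : ∫ x in Set.Iio c, ℓm (c - x) ∂ν =
          (1-ε') * (∫ x in Set.Iio c, ℓm (c - x) ∂μ) + ε' * extLd ℓp ℓm (c - A) := by
        rw [conv4 (ℓp := ℓp) (ℓm := ℓm) ν, conv4 (ℓp := ℓp) (ℓm := ℓm) μ, hνdef,
          setint_perturb μ A ε' hε'pos.le hε'1 _ hintm2 _ measurableSet_Iio,
          Set.indicator_of_mem (Set.mem_Iio.mpr hcA)]
      have hml : extLd ℓp ℓm (c - A) = ℓm (c - A) := extLd_of_pos _ _ (by linarith)
      have hlmpos : 0 < ℓm (c - A) := aux_ld_pos h_convex h_smono h_left (by linarith)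
      have hDmν : (∫ x in Set.Ici c, ℓp (x - c) ∂ν) - ∫ x in Set.Iio c, ℓm (c - x) ∂ν < 0 := by
        rw [e3, e4, hml]
        have hfac : (0:ℝ) ≤ 1 - ε' := by linarith
        nlinarith [mul_nonneg hfac (neg_nonneg.mpr hcon), mul_pos hε'pos hlmpos]
      obtain ⟨β, hβ⟩ := exists_better_minus h_convex h_smono h_nonneg h_right h_left hAB hc ν
        hνsupp hDmν
      exact absurd (hcall β) (not_le.mpr hβ)
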